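/- Let n, K, M, τ ≥ 1 be integers with 3M ≤ τ and 3K ≤ τ, and set T = n·K. Let σ be a permutation of {0, 1, …, T−1} with |σ(t) − t| ≤ M for all t, and for u ∈ {0, …, T−1} let block(u) = ⌊u/K⌋ ∈ {0, …, n−1}. For each t ∈ {0, …, T−1}, let w_t : {−1,+1}ⁿ → [−1, 1] be a function such that w_t(ε) = w_t(ε′) whenever ε_b = ε′_b for every b of the form b = block(σ⁻¹(s)) with s ≤ t − τ (i.e. w_t depends only on the signs of blocks whose losses were revealed at least τ rounds before t). Then 2^{−n} · Σ_{ε ∈ {−1,+1}ⁿ} ( Σ_{t=0}^{T−1} ε_{block(σ⁻¹(t))} · w_t(ε) + K·|Σ_{i=0}^{n−1} ε_i| ) ≥ K·√n/√2. -/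

import Mathlib

open Finset


private lemma cbsq (m : ℕ) : 16 ^ m ≤ (Nat.choose (2*m) m)^2 * (4*m+1) := by
  induction m with
  | zero => norm_num
  | succ m ih =>
    have h1 : (m+1) * Nat.choose (2*(m+1)) (m+1) = 2 * ((2*m+1) * Nat.choose (2*m) m) := by
      have hs := Nat.add_one_mul_choose_eq (2*m) m
      have hp : Nat.choose (2*m+2) (m+1) = Nat.choose (2*m+1) m + Nat.choose (2*m+1) (m+1) :=
        Nat.choose_succ_succ (2*m+1) m
      have hsym : Nat.choose (2*m+1) m = Nat.choose (2*m+1) (m+1) := by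
        have := Nat.choose_symm (show m+1 ≤ 2*m+1 by omega)
        simpa [show 2*m+1-(m+1) = m by omega] using this
      have : Nat.choose (2*(m+1)) (m+1) = 2 * Nat.choose (2*m+1) (m+1) := by
        rw [show 2*(m+1) = 2*m+2 from rfl, hp, hsym]; ring
      rw [this]
      have hs' : (2*m+1) * Nat.choose (2*m) m = Nat.choose (2*m+1) (m+1) * (m+1) := by
        simpa [Nat.succ_eq_add_one] using hs
      rw [hs']; ring
    -- cancel (m+1)^2 * (4m+1)
    have key : 16 ^ (m+1) * ((m+1)^2 * (4*m+1)) ≤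
        ((Nat.choose (2*(m+1)) (m+1))^2 * (4*(m+1)+1)) * ((m+1)^2 * (4*m+1)) := by
      have h2 : ((m+1) * Nat.choose (2*(m+1)) (m+1))^2 = 4 * (2*m+1)^2 * (Nat.choose (2*m) m)^2 := by
        rw [h1]; ring
      have h3 : ((Nat.choose (2*(m+1)) (m+1))^2 * (4*(m+1)+1)) * ((m+1)^2 * (4*m+1))
          = (4 * (2*m+1)^2 * (4*(m+1)+1)) * ((Nat.choose (2*m) m)^2 * (4*m+1)) := by
        have : (Nat.choose (2*(m+1)) (m+1))^2 * (m+1)^2 = 4 * (2*m+1)^2 * (Nat.choose (2*m) m)^2 := by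
          rw [← h2]; ring
        calc ((Nat.choose (2*(m+1)) (m+1))^2 * (4*(m+1)+1)) * ((m+1)^2 * (4*m+1))
            = ((Nat.choose (2*(m+1)) (m+1))^2 * (m+1)^2) * ((4*(m+1)+1) * (4*m+1)) := by ring
          _ = (4 * (2*m+1)^2 * (Nat.choose (2*m) m)^2) * ((4*(m+1)+1) * (4*m+1)) := by rw [this]
          _ = (4 * (2*m+1)^2 * (4*(m+1)+1)) * ((Nat.choose (2*m) m)^2 * (4*m+1)) := by ring
      rw [h3]
      calc 16 ^ (m+1) * ((m+1)^2 * (4*m+1))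
          ≤ (4 * (2*m+1)^2 * (4*(m+1)+1)) * 16^m := by
            rw [pow_succ]; nlinarith [pow_pos (show 0 < 16 by norm_num) m]
        _ ≤ (4 * (2*m+1)^2 * (4*(m+1)+1)) * ((Nat.choose (2*m) m)^2 * (4*m+1)) :=
            Nat.mul_le_mul_left _ ih
    have hpos : 0 < (m+1)^2 * (4*m+1) := by positivity
    exact Nat.le_of_mul_le_mul_right key hpos

private lemma cb_real (m : ℕ) : (4:ℝ)^m ≤ (Nat.choose (2*m) m) * Real.sqrt (4*m+1) := by
  have h1 : (0:ℝ) ≤ (Nat.choose (2*m) m) * Real.sqrt (4*m+1) := by positivity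
  have h2 : ((4:ℝ)^m)^2 ≤ ((Nat.choose (2*m) m) * Real.sqrt (4*m+1))^2 := by
    rw [mul_pow, Real.sq_sqrt (by positivity)]
    have := cbsq m
    have : (16:ℝ)^m ≤ (Nat.choose (2*m) m)^2 * (4*m+1) := by exact_mod_cast this
    calc ((4:ℝ)^m)^2 = 16^m := by rw [← pow_mul, pow_mul']; norm_num
      _ ≤ _ := this
  nlinarith [pow_pos (show (0:ℝ)<4 by norm_num) m, h2]

private lemma sqrt_sum (M : ℕ) :
    Real.sqrt M ≤ ∑ m ∈ Finset.range M, 1 / Real.sqrt (4*m+1) := by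
  induction M with
  | zero => simp
  | succ M ih =>
    rw [Finset.sum_range_succ]
    have ha : Real.sqrt M ^ 2 = M := Real.sq_sqrt (by positivity)
    have hb : Real.sqrt (M+1) ^ 2 = M+1 := Real.sq_sqrt (by positivity)
    have hc : Real.sqrt (4*M+1) ^ 2 = 4*M+1 := Real.sq_sqrt (by positivity)
    have ha0 : 0 ≤ Real.sqrt M := Real.sqrt_nonneg _
    have hb0 : 0 ≤ Real.sqrt (M+1) := Real.sqrt_nonneg _
    have hc0 : (0:ℝ) < Real.sqrt (4*M+1) := Real.sqrt_pos.2 (by positivity)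
    have hsm : Real.sqrt M ≤ Real.sqrt (M+1) := Real.sqrt_le_sqrt (by linarith)
    have hab : (M:ℝ) ≤ Real.sqrt M * Real.sqrt (M+1) := by
      rw [← Real.sqrt_mul (by positivity)]
      have h0 : (M:ℝ) = Real.sqrt ((M:ℝ)^2) := (Real.sqrt_sq (by positivity)).symm
      nth_rewrite 1 [h0]
      exact Real.sqrt_le_sqrt (by nlinarith)
    have hcab : Real.sqrt (4*M+1) ≤ Real.sqrt M + Real.sqrt (M+1) := by
      nlinarith
    have hdiff : (Real.sqrt (M+1) - Real.sqrt M) * (Real.sqrt (M+1) + Real.sqrt M) = 1 := by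
      nlinarith
    have h5 : (Real.sqrt (M+1) - Real.sqrt M) * Real.sqrt (4*M+1) ≤ 1 := by
      calc (Real.sqrt (M+1) - Real.sqrt M) * Real.sqrt (4*M+1)
          ≤ (Real.sqrt (M+1) - Real.sqrt M) * (Real.sqrt M + Real.sqrt (M+1)) :=
            mul_le_mul_of_nonneg_left hcab (by linarith)
        _ = 1 := by linarith [hdiff]
    have key : Real.sqrt ((M:ℝ)+1) ≤ Real.sqrt M + 1 / Real.sqrt (4*M+1) := by
      have h6 : Real.sqrt (M+1) - Real.sqrt M ≤ 1 / Real.sqrt (4*M+1) := by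
        rw [le_div_iff₀ hc0]; exact h5
      linarith
    push_cast
    linarith [ih]


private def Ssum (n : ℕ) (b : Fin n → Bool) : ℤ := ∑ i, (if b i then 1 else -1)
private def Fsum (n : ℕ) : ℤ := ∑ b : Fin n → Bool, |Ssum n b|
private def Zcnt (n : ℕ) : ℕ := (univ.filter (fun b : Fin n → Bool => Ssum n b = 0)).card

private lemma abs_aux (x : ℤ) : |x + 1| + |x + -1| = 2*|x| + (if x = 0 then 2 else 0) := by
  rcases lt_trichotomy x 0 with h | h | h
  · rw [abs_of_nonpos (by omega), abs_of_nonpos (by omega), abs_of_neg h, if_neg (by omega)]; ring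
  · subst h; norm_num
  · rw [abs_of_nonneg (by omega), abs_of_nonneg (by omega), abs_of_pos h, if_neg (by omega)]; ring

private lemma Fsum_succ (n : ℕ) : Fsum (n+1) = 2 * Fsum n + 2 * Zcnt n := by
  have e : Fsum (n+1) = ∑ p : Bool × (Fin n → Bool), |Ssum (n+1) ((Fin.consEquiv (fun _ : Fin (n+1) => Bool)) p)| :=
    (Equiv.sum_comp (Fin.consEquiv (fun _ : Fin (n+1) => Bool)) (fun b => |Ssum (n+1) b|)).symm
  rw [e, Fintype.sum_prod_type, Finset.sum_comm]
  have hS : ∀ (c : Bool) (b : Fin n → Bool),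
      Ssum (n+1) ((Fin.consEquiv (fun _ : Fin (n+1) => Bool)) (c, b)) = (if c then 1 else -1) + Ssum n b := by
    intro c b
    rw [Ssum, Fin.sum_univ_succ]
    simp [Fin.consEquiv, Ssum]
  have key : ∀ b : Fin n → Bool,
      (∑ c : Bool, |Ssum (n+1) ((Fin.consEquiv (fun _ : Fin (n+1) => Bool)) (c, b))|)
        = 2*|Ssum n b| + (if Ssum n b = 0 then 2 else 0) := by
    intro b
    rw [Fintype.sum_bool, hS, hS]
    simpa [add_comm] using abs_aux (Ssum n b)
  rw [Finset.sum_congr rfl (fun b _ => key b), Finset.sum_add_distrib, ← Finset.mul_sum,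
    ← Finset.sum_filter, Finset.sum_const, ← Fsum, ← Zcnt]
  push_cast
  ring



private lemma Ssum_eq (n : ℕ) (b : Fin n → Bool) :
    Ssum n b = 2 * ((univ.filter (fun i => b i = true)).card : ℤ) - n := by
  rw [Ssum, Finset.sum_congr rfl (fun i _ => show (if b i then (1:ℤ) else -1) = (if b i = true then 2 else 0) - 1 by
    by_cases h : b i <;> simp [h])]
  rw [Finset.sum_sub_distrib, ← Finset.sum_filter, Finset.sum_const, Finset.sum_const]
  simp [card_univ, mul_comm]

private lemma Zcnt_odd (m : ℕ) : Zcnt (2*m+1) = 0 := by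
  rw [Zcnt, Finset.card_eq_zero, Finset.filter_eq_empty_iff]
  intro b _
  rw [Ssum_eq]
  intro h
  omega

private lemma Zcnt_even (m : ℕ) : Nat.choose (2*m) m ≤ Zcnt (2*m) := by
  have := Finset.card_le_card_of_injOn (s := Finset.powersetCard m (univ : Finset (Fin (2*m))))
    (t := univ.filter (fun b : Fin (2*m) → Bool => Ssum (2*m) b = 0))
    (fun s => fun j => decide (j ∈ s))
    (by
      intro s hs
      rw [Finset.mem_coe, Finset.mem_powersetCard] at hs
      rw [Finset.mem_coe, Finset.mem_filter]
      refine ⟨Finset.mem_univ _, ?_⟩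
      rw [Ssum_eq]
      have : (univ.filter (fun i => decide (i ∈ s) = true)) = s := by
        ext i; simp
      rw [this, hs.2]
      push_cast
      ring)
    (by
      intro s _ t _ h
      ext i
      have := congrFun h i
      simpa using this)
  rwa [Finset.card_powersetCard, Finset.card_univ, Fintype.card_fin] at this




private lemma Fsum_ge (n : ℕ) :
    2^n * ∑ m ∈ Finset.range ((n+1)/2), 1/Real.sqrt (4*m+1) ≤ (Fsum n : ℝ) := by
  induction n with
  | zero => simp [Fsum, Ssum]
  | succ n ih =>
    rw [Fsum_succ]
    push_cast
    rcases Nat.even_or_odd n with ⟨m, hm⟩ | ⟨m, hm⟩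
    · have h1 : (n+1+1)/2 = m+1 := by omega
      have h2 : (n+1)/2 = m := by omega
      rw [h1, Finset.sum_range_succ]
      rw [h2] at ih
      have hz : ((Nat.choose (2*m) m : ℝ)) ≤ (Zcnt n : ℝ) := by
        have h' := Zcnt_even m
        rw [show Zcnt (2*m) = Zcnt n by rw [show 2*m = n by omega]] at h'
        exact_mod_cast h'
      have hc := cb_real m
      have hs : (0:ℝ) < Real.sqrt (4*m+1) := Real.sqrt_pos.2 (by positivity)
      have h4 : (2:ℝ)^n = 4^m := by
        rw [show n = 2*m by omega, pow_mul]; norm_num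
      have h5 : (2:ℝ)^(n+1) * (1/Real.sqrt (4*m+1)) ≤ 2 * (Zcnt n : ℝ) := by
        rw [pow_succ, mul_comm ((2:ℝ)^n) 2, mul_assoc, h4]
        have : (4:ℝ)^m * (1/Real.sqrt (4*m+1)) ≤ (Nat.choose (2*m) m : ℝ) := by
          rw [mul_one_div, div_le_iff₀ hs]; exact hc
        nlinarith
      have h6 : (2:ℝ)^(n+1) * ∑ x ∈ Finset.range m, 1/Real.sqrt (4*x+1) ≤ 2 * (Fsum n : ℝ) := by
        rw [pow_succ, mul_comm ((2:ℝ)^n) 2, mul_assoc]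
        linarith
      rw [mul_add]
      linarith
    · have h1 : (n+1+1)/2 = (n+1)/2 := by omega
      have hz : (Zcnt n : ℝ) = 0 := by
        rw [show n = 2*m+1 by omega, Zcnt_odd]; norm_num
      rw [h1, hz]
      rw [pow_succ, mul_comm ((2:ℝ)^n) 2, mul_assoc]
      linarith

private lemma khintchine (n : ℕ) :
    2^n * (Real.sqrt n / Real.sqrt 2) ≤ (Fsum n : ℝ) := by
  refine le_trans ?_ (Fsum_ge n)
  have h2 : (0:ℝ) < 2 := by norm_num
  have key : Real.sqrt n / Real.sqrt 2 ≤ Real.sqrt ((n+1)/2 : ℕ) := by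
    rw [← Real.sqrt_div (by positivity)]
    apply Real.sqrt_le_sqrt
    rw [div_le_iff₀ h2]
    have : n ≤ 2 * ((n+1)/2) := by omega
    calc (n:ℝ) ≤ (2*((n+1)/2 : ℕ) : ℕ) := by exact_mod_cast this
      _ = ((n+1)/2 : ℕ) * 2 := by push_cast; ring
  have := sqrt_sum ((n+1)/2)
  have hp : (0:ℝ) ≤ 2^n := by positivity
  calc (2:ℝ)^n * (Real.sqrt n / Real.sqrt 2) ≤ 2^n * Real.sqrt ((n+1)/2 : ℕ) := by
        exact mul_le_mul_of_nonneg_left key hp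
    _ ≤ _ := mul_le_mul_of_nonneg_left this hp

private lemma piFinset_sum_eq (n : ℕ) :
    ∑ ε ∈ Fintype.piFinset (fun _ : Fin n => ({-1, 1} : Finset ℝ)), |∑ i, ε i| = (Fsum n : ℝ) := by
  classical
  rw [Fsum]
  push_cast
  refine Finset.sum_nbij' (i := fun (ε : Fin n → ℝ) => fun j => if ε j = 1 then true else false)
    (j := fun (b : Fin n → Bool) => fun j => if b j then (1:ℝ) else -1) ?_ ?_ ?_ ?_ ?_
  · intro b _; exact Finset.mem_univ _
  · intro b _
    rw [Fintype.mem_piFinset]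
    intro j
    by_cases h : b j <;> simp [h]
  · intro ε hε
    rw [Fintype.mem_piFinset] at hε
    funext j
    have := hε j
    simp only [Finset.mem_insert, Finset.mem_singleton] at this
    rcases this with h | h <;> simp [h, show (-1:ℝ) ≠ 1 by norm_num]
  · intro b _
    funext j
    by_cases h : b j <;> simp [h, show (-1:ℝ) ≠ 1 by norm_num]
  · intro ε hε
    rw [Fintype.mem_piFinset] at hε
    congr 1
    rw [Ssum]
    push_cast
    apply Finset.sum_congr rfl
    intro j _
    have := hε j
    simp only [Finset.mem_insert, Finset.mem_singleton] at this
    rcases this with h | h <;> simp [h, show (-1:ℝ) ≠ 1 by norm_num]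


section Aux
variable (n K M τ T : ℕ) (σ : Equiv.Perm (Fin T)) (blk : Fin T → Fin n)

private lemma block_sep (hK : 1 ≤ K) (hMτ : 3 * M ≤ τ) (hKτ : 3 * K ≤ τ)
    (hσ : ∀ t : Fin T, |((σ t : ℕ) : ℤ) - ((t : ℕ) : ℤ)| ≤ (M : ℤ))
    (hblk : ∀ u : Fin T, (blk u : ℕ) = (u : ℕ) / K)
    (t s : Fin T) (hs : (s : ℕ) + τ ≤ (t : ℕ)) :
    blk (σ.symm s) ≠ blk (σ.symm t) := by
  set u := σ.symm s with hu
  set v := σ.symm t with hv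
  have h1 : |((s : ℕ) : ℤ) - ((u : ℕ) : ℤ)| ≤ (M : ℤ) := by
    have := hσ u
    rwa [hu, Equiv.apply_symm_apply] at this
  have h2 : |((t : ℕ) : ℤ) - ((v : ℕ) : ℤ)| ≤ (M : ℤ) := by
    have := hσ v
    rwa [hv, Equiv.apply_symm_apply] at this
  rw [abs_le] at h1 h2
  have hnat : (u : ℕ) + K ≤ (v : ℕ) := by omega
  have hdiv : ((u : ℕ)) / K < ((v : ℕ)) / K := by
    have : ((u : ℕ) + K) / K ≤ (v : ℕ) / K := Nat.div_le_div_right hnat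
    rw [Nat.add_div_right _ hK] at this
    omega
  intro h
  rw [← hblk u, ← hblk v] at hdiv
  rw [h] at hdiv
  exact lt_irrefl _ hdiv

end Aux

section Aux2
variable {n K M τ T : ℕ}

private lemma zero_term (σ : Equiv.Perm (Fin T)) (blk : Fin T → Fin n)
    (w : Fin T → (Fin n → ℝ) → ℝ)
    (hmeas : ∀ (t : Fin T) (ε ε' : Fin n → ℝ),
      (∀ s : Fin T, (s : ℕ) + τ ≤ (t : ℕ) →
        ε (blk (σ.symm s)) = ε' (blk (σ.symm s))) →
      w t ε = w t ε')
    (hsep : ∀ t s : Fin T, (s : ℕ) + τ ≤ (t : ℕ) → blk (σ.symm s) ≠ blk (σ.symm t))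
    (t : Fin T) :
    ∑ ε ∈ Fintype.piFinset (fun _ : Fin n => ({-1, 1} : Finset ℝ)),
      ε (blk (σ.symm t)) * w t ε = 0 := by
  classical
  set b := blk (σ.symm t) with hb
  refine Finset.sum_involution (fun ε _ => Function.update ε b (-(ε b))) ?_ ?_ ?_ ?_
  · intro ε hε
    have hw : w t (Function.update ε b (-(ε b))) = w t ε := by
      apply hmeas
      intro s hs
      rw [Function.update_of_ne (hsep t s hs)]
    rw [hw, Function.update_self]
    ring
  · intro ε hε hne
    have hεb : ε b ≠ 0 := by
      intro h0
      apply hne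
      rw [h0]
      ring_nf
    intro h
    have := congrFun h b
    rw [Function.update_self] at this
    apply hεb
    linarith [this]
  · intro ε hε
    rw [Fintype.mem_piFinset] at hε ⊢
    intro j
    rcases eq_or_ne j b with h | h
    · subst h
      rw [Function.update_self]
      have h2 := hε b
      simp only [Finset.mem_insert, Finset.mem_singleton] at h2 ⊢
      rcases h2 with h | h <;> rw [h] <;> norm_num
    · rw [Function.update_of_ne h]
      exact hε j
  · intro ε hε
    funext j
    rcases eq_or_ne j b with h | h
    · subst h
      rw [Function.update_self, Function.update_self]
      ring
    · rw [Function.update_of_ne h, Function.update_of_ne h]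

end Aux2


/-- **Theorem 2 of the paper: `Ω(√(τT))` regret lower bound for OLLP with
permutation window `M ≤ τ/3`.** The `T = n·K` rounds are divided into `n` blocks
of size `K ≤ τ/3`; all losses in block `i` are `w ↦ ε_i·w` with a uniformly
random sign `ε_i`; the learner applies a local permutation `σ` with window
`M ≤ τ/3`, so the loss played at time `t` has sign `ε (blk (σ⁻¹ t))`; feedback is
delayed by `τ` rounds, so the prediction `w_t ∈ [-1,1]` depends only on block
signs revealed by times `s ≤ t - τ`. Then the expected regret is at least
`K·√n/√2`. -/
theorem ollp_delayed_feedback_regret_lower_bound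
    (n K M τ : ℕ) (hn : 1 ≤ n) (hK : 1 ≤ K) (hM : 1 ≤ M) (hτ : 1 ≤ τ)
    (hMτ : 3 * M ≤ τ) (hKτ : 3 * K ≤ τ)
    (T : ℕ) (hT : T = n * K)
    (σ : Equiv.Perm (Fin T))
    (hσ : ∀ t : Fin T, |((σ t : ℕ) : ℤ) - ((t : ℕ) : ℤ)| ≤ (M : ℤ))
    (blk : Fin T → Fin n) (hblk : ∀ u : Fin T, (blk u : ℕ) = (u : ℕ) / K)
    (w : Fin T → (Fin n → ℝ) → ℝ)
    (hrange : ∀ t ε, w t ε ∈ Set.Icc (-1 : ℝ) 1)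
    (hmeas : ∀ (t : Fin T) (ε ε' : Fin n → ℝ),
      (∀ s : Fin T, (s : ℕ) + τ ≤ (t : ℕ) →
        ε (blk (σ.symm s)) = ε' (blk (σ.symm s))) →
      w t ε = w t ε') :
    (K : ℝ) * Real.sqrt n / Real.sqrt 2 ≤
      ((2 : ℝ) ^ n)⁻¹ *
        ∑ ε ∈ Fintype.piFinset (fun _ : Fin n => ({-1, 1} : Finset ℝ)),
          ((∑ t : Fin T, ε (blk (σ.symm t)) * w t ε)
            + (K : ℝ) * |∑ i : Fin n, ε i|) := by
  have hsep : ∀ t s : Fin T, (s : ℕ) + τ ≤ (t : ℕ) →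
      blk (σ.symm s) ≠ blk (σ.symm t) :=
    fun t s hs => block_sep n K M τ T σ blk hK hMτ hKτ hσ hblk t s hs
  have hzero := zero_term σ blk w hmeas hsep
  rw [Finset.sum_add_distrib]
  have hA : ∑ ε ∈ Fintype.piFinset (fun _ : Fin n => ({-1, 1} : Finset ℝ)),
      ∑ t : Fin T, ε (blk (σ.symm t)) * w t ε = 0 := by
    rw [Finset.sum_comm]
    exact Finset.sum_eq_zero (fun t _ => hzero t)
  rw [hA, zero_add, ← Finset.mul_sum, piFinset_sum_eq n]
  have hkh := khintchine n
  have hp : (0:ℝ) < 2^n := by positivity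
  have hK0 : (0:ℝ) ≤ K := by positivity
  have h1 : 2^n * ((K : ℝ) * Real.sqrt n / Real.sqrt 2) ≤ (K : ℝ) * (Fsum n : ℝ) := by
    have := mul_le_mul_of_nonneg_left hkh hK0
    calc 2^n * ((K : ℝ) * Real.sqrt n / Real.sqrt 2)
        = (K : ℝ) * (2^n * (Real.sqrt n / Real.sqrt 2)) := by ring
      _ ≤ (K : ℝ) * (Fsum n : ℝ) := this
  calc (K : ℝ) * Real.sqrt n / Real.sqrt 2
      = ((2:ℝ)^n)⁻¹ * (2^n * ((K : ℝ) * Real.sqrt n / Real.sqrt 2)) := by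
        field_simp
    _ ≤ ((2:ℝ)^n)⁻¹ * ((K : ℝ) * (Fsum n : ℝ)) :=
        mul_le_mul_of_nonneg_left h1 (by positivity)
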